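/- (Proposition 4, minimizer correspondence under time rescaling.) Let t₀ < t₁ be real numbers, Δ = (t₁ − t₀)/2, and let n ≥ 1 and s ≥ 1 be natural numbers. Fix boundary data δⱼ⁻, δⱼ⁺ ∈ ℝ for j = 0,…,s−1 and set δ̄ⱼ⁻ = Δʲ·δⱼ⁻ and δ̄ⱼ⁺ = Δʲ·δⱼ⁺. Let F be the set of real polynomials p of degree < n with p⁽ʲ⁾(t₀) = δⱼ⁻ and p⁽ʲ⁾(t₁) = δⱼ⁺ for all j < s, and let F̄ be the set of real polynomials q of degree < n with q⁽ʲ⁾(−1) = δ̄ⱼ⁻ and q⁽ʲ⁾(1) = δ̄ⱼ⁺ for all j < s. Then a polynomial q ∈ F̄ minimizes ∫_{−1}^{1} (q⁽⁴⁾(τ))² dτ over F̄ if and only if the polynomial p defined by p(t) = q((t − t₀)/Δ − 1) belongs to F and minimizes ∫_{t₀}^{t₁} (p⁽⁴⁾(t))² dt over F. -/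

import Mathlib

open Polynomial

lemma iter_deriv_comp_linear (a b : ℝ) (q : ℝ[X]) (j : ℕ) :
    derivative^[j] (q.comp (C a * X + C b)) =
      C (a ^ j) * (derivative^[j] q).comp (C a * X + C b) := by
  induction j with
  | zero => simp
  | succ j ih =>
    rw [Function.iterate_succ_apply', ih, derivative_mul, derivative_C, zero_mul, zero_add,
      derivative_comp]
    simp only [derivative_add, derivative_mul, derivative_C, derivative_X, zero_mul, mul_one,
      zero_add, add_zero, Function.iterate_succ_apply']
    rw [← mul_assoc, mul_comm (C (a ^ j)) (C a), ← C_mul, ← pow_succ']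

lemma comp_linear_linear (a b a' b' : ℝ) (h1 : a * a' = 1) (h2 : a * b' + b = 0) :
    (C a * X + C b).comp (C a' * X + C b') = X := by
  have : (C a * X + C b).comp (C a' * X + C b') = C (a * a') * X + C (a * b' + b) := by
    rw [add_comp, mul_comp, C_comp, X_comp, mul_add, ← mul_assoc, ← C_mul, ← C_mul,
      add_assoc, C_comp, ← C_add]
  rw [this, h1, h2]; simp

lemma degree_comp_linear (a b : ℝ) (ha : a ≠ 0) (q : ℝ[X]) :
    (q.comp (C a * X + C b)).degree = q.degree := by
  rcases eq_or_ne q 0 with rfl | hq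
  · simp
  have hc : q.comp (C a * X + C b) ≠ 0 := by
    intro h
    have := congrArg (fun r => r.comp (C a⁻¹ * X + C (-b/a))) h
    simp only [comp_assoc, zero_comp] at this
    rw [comp_linear_linear a b a⁻¹ (-b/a) (mul_inv_cancel₀ ha) (by field_simp; ring), comp_X] at this
    exact hq this
  rw [degree_eq_natDegree hc, degree_eq_natDegree hq, natDegree_comp,
    natDegree_linear ha, mul_one]

lemma snap_comp_linear (t₀ t₁ : ℝ) (ht : t₀ < t₁) (Δ : ℝ) (hΔ : Δ = (t₁ - t₀) / 2)
    (w : ℝ[X]) :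
    (∫ t in t₀..t₁, ((derivative^[4] (w.comp (C Δ⁻¹ * X + C (-t₀ / Δ - 1)))).eval t) ^ 2)
      = Δ⁻¹ ^ 7 * ∫ τ in (-1:ℝ)..1, ((derivative^[4] w).eval τ) ^ 2 := by
  have hΔ0 : (0:ℝ) < Δ := by rw [hΔ]; linarith
  have hne : Δ ≠ 0 := ne_of_gt hΔ0
  have key : ∀ t : ℝ, ((derivative^[4] (w.comp (C Δ⁻¹ * X + C (-t₀ / Δ - 1)))).eval t) ^ 2
      = Δ⁻¹ ^ 8 * ((derivative^[4] w).eval (Δ⁻¹ * t + (-t₀ / Δ - 1))) ^ 2 := by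
    intro t
    rw [iter_deriv_comp_linear]
    simp [eval_comp, mul_pow, ← pow_mul]
  simp only [key]
  rw [intervalIntegral.integral_const_mul,
    intervalIntegral.integral_comp_mul_add (fun x => ((derivative^[4] w).eval x) ^ 2)
      (inv_ne_zero hne) (-t₀ / Δ - 1)]
  have e1 : Δ⁻¹ * t₀ + (-t₀ / Δ - 1) = -1 := by field_simp; ring
  have e2 : Δ⁻¹ * t₁ + (-t₀ / Δ - 1) = 1 := by
    field_simp; linarith [hΔ]
  rw [e1, e2, inv_inv, smul_eq_mul, ← mul_assoc]
  congr 1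
  field_simp

theorem minimizer_correspondence_rescale (t₀ t₁ : ℝ) (ht : t₀ < t₁) (Δ : ℝ)
    (hΔ : Δ = (t₁ - t₀) / 2) (n s : ℕ) (hn : 1 ≤ n) (hs : 1 ≤ s)
    (δm δp : ℕ → ℝ) (F Fbar : Set (Polynomial ℝ))
    (hF : F = {p : Polynomial ℝ | p.degree < (n : WithBot ℕ) ∧
      ∀ j < s, (Polynomial.derivative^[j] p).eval t₀ = δm j ∧
        (Polynomial.derivative^[j] p).eval t₁ = δp j})
    (hFbar : Fbar = {q : Polynomial ℝ | q.degree < (n : WithBot ℕ) ∧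
      ∀ j < s, (Polynomial.derivative^[j] q).eval (-1 : ℝ) = Δ ^ j * δm j ∧
        (Polynomial.derivative^[j] q).eval (1 : ℝ) = Δ ^ j * δp j})
    (q p : Polynomial ℝ)
    (hp : p = q.comp (Polynomial.C Δ⁻¹ * Polynomial.X + Polynomial.C (-t₀ / Δ - 1))) :
    (q ∈ Fbar ∧ ∀ q' ∈ Fbar,
        (∫ τ in (-1 : ℝ)..1, ((Polynomial.derivative^[4] q).eval τ) ^ 2) ≤
          ∫ τ in (-1 : ℝ)..1, ((Polynomial.derivative^[4] q').eval τ) ^ 2) ↔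
    (p ∈ F ∧ ∀ p' ∈ F,
        (∫ t in t₀..t₁, ((Polynomial.derivative^[4] p).eval t) ^ 2) ≤
          ∫ t in t₀..t₁, ((Polynomial.derivative^[4] p').eval t) ^ 2) := by
  have hΔ0 : (0:ℝ) < Δ := by rw [hΔ]; linarith
  have hne : Δ ≠ 0 := ne_of_gt hΔ0
  set c : ℝ := -t₀ / Δ - 1 with hc
  set u : ℝ[X] := C Δ⁻¹ * X + C c with hu
  set v : ℝ[X] := C Δ * X + C (Δ + t₀) with hv
  have huv : u.comp v = X :=
    comp_linear_linear _ _ _ _ (inv_mul_cancel₀ hne) (by rw [hc]; field_simp; ring)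
  have hvu : v.comp u = X :=
    comp_linear_linear _ _ _ _ (mul_inv_cancel₀ hne) (by rw [hc]; field_simp; ring)
  have eu0 : u.eval t₀ = -1 := by rw [hu, hc]; simp; field_simp; ring
  have eu1 : u.eval t₁ = 1 := by rw [hu, hc]; simp; field_simp; linarith
  have ev0 : v.eval (-1:ℝ) = t₀ := by rw [hv]; simp
  have ev1 : v.eval (1:ℝ) = t₁ := by rw [hv]; simp; linarith [hΔ]
  -- membership transfers
  have hmemF : ∀ w ∈ Fbar, w.comp u ∈ F := by
    intro w hw
    rw [hFbar, Set.mem_setOf_eq] at hw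
    obtain ⟨hdeg, hbc⟩ := hw
    rw [hF, Set.mem_setOf_eq]
    refine ⟨by rwa [hu, degree_comp_linear _ _ (inv_ne_zero hne)], ?_⟩
    intro j hj
    obtain ⟨h1, h2⟩ := hbc j hj
    rw [hu, iter_deriv_comp_linear]
    simp only [eval_mul, eval_C, eval_comp, ← hu, eu0, eu1, h1, h2, ← mul_assoc, ← mul_pow,
      inv_mul_cancel₀ hne, one_pow, one_mul]
    exact ⟨trivial, trivial⟩
  have hmemFbar : ∀ w ∈ F, w.comp v ∈ Fbar := by
    intro w hw
    rw [hF, Set.mem_setOf_eq] at hw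
    obtain ⟨hdeg, hbc⟩ := hw
    rw [hFbar, Set.mem_setOf_eq]
    refine ⟨by rwa [hv, degree_comp_linear _ _ hne], ?_⟩
    intro j hj
    obtain ⟨h1, h2⟩ := hbc j hj
    rw [hv, iter_deriv_comp_linear]
    simp only [eval_mul, eval_C, eval_comp, ← hv, ev0, ev1, h1, h2]
    exact ⟨trivial, trivial⟩
  -- identities
  have idv : ∀ w : ℝ[X], (w.comp v).comp u = w := by
    intro w; rw [comp_assoc, hvu, comp_X]
  have idu : ∀ w : ℝ[X], (w.comp u).comp v = w := by
    intro w; rw [comp_assoc, huv, comp_X]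
  have hsnap : ∀ w : ℝ[X],
      (∫ t in t₀..t₁, ((derivative^[4] (w.comp u)).eval t) ^ 2)
        = Δ⁻¹ ^ 7 * ∫ τ in (-1:ℝ)..1, ((derivative^[4] w).eval τ) ^ 2 := by
    intro w; rw [hu]; exact snap_comp_linear t₀ t₁ ht Δ hΔ w
  have hpos : (0:ℝ) < Δ⁻¹ ^ 7 := by positivity
  subst hp
  constructor
  · rintro ⟨hqmem, hqmin⟩
    refine ⟨hmemF q hqmem, ?_⟩
    intro p' hp'
    have h2 : (∫ t in t₀..t₁, ((derivative^[4] p').eval t) ^ 2)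
        = Δ⁻¹ ^ 7 * ∫ τ in (-1:ℝ)..1, ((derivative^[4] (p'.comp v)).eval τ) ^ 2 := by
      conv_lhs => rw [← idv p']
      exact hsnap _
    rw [hsnap q, h2]
    exact mul_le_mul_of_nonneg_left (hqmin _ (hmemFbar p' hp')) (le_of_lt hpos)
  · rintro ⟨hpmem, hpmin⟩
    have hqid : (q.comp u).comp v = q := idu q
    have hqmem : q ∈ Fbar := by
      have := hmemFbar _ hpmem; rwa [hqid] at this
    refine ⟨hqmem, ?_⟩
    intro q' hq'
    have := hpmin (q'.comp u) (hmemF q' hq')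
    rw [hsnap q, hsnap q'] at this
    exact (mul_le_mul_iff_right₀ hpos).mp this
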